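/- The element δ := (α/2) ⊗ 1 + 1 ⊗ (α/2) of B = R ⊗_{R^s} R satisfies f·δ = δ·f for every f ∈ R, where f·δ denotes the left R-action and δ·f the right R-action; consequently the map R → B, f ↦ f·δ, is a morphism of (R,R)-bimodules. Moreover, the composite of this map with the multiplication map B → R, a ⊗ b ↦ ab, equals multiplication by α on R. -/

import Mathlib

/-!
Setup as in Statement 11: `k` a field of characteristic `≠ 2`, `h` a finite-dimensional
`k`-vector space with dual `h* = Module.Dual k h`, `α ∈ h*`, `α^∨ ∈ h` with `α α^∨ = 2`,
`R = Sym(h*)` (encoded by its universal property via `j`), `σ` the `k`-algebra automorphism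
of `R` extending the reflection `s β = β - ⟨α^∨, β⟩ • α`, `R^s` its fixed subalgebra, and
`B = R ⊗[R^s] R` the `(R, R)`-bimodule with left action `f • (a ⊗ b) = (f a) ⊗ b` and right
action `(a ⊗ b) • f = a ⊗ (b f)`; since `R^s` is central, the multiplication map
`B → R, a ⊗ b ↦ a b` is well defined.

STATEMENT 12: the element `δ := (α/2) ⊗ 1 + 1 ⊗ (α/2)` of `B` satisfies `f • δ = δ • f` for
every `f ∈ R`; consequently the map `R → B, f ↦ f • δ`, is a morphism of `(R, R)`-bimodules.
Moreover the composite of this map with the multiplication map `B → R` equals multiplication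
by `α` on `R`.
-/

open TensorProduct

universe u

variable {k : Type u} [Field k] {h : Type u} [AddCommGroup h] [Module k h]
  [FiniteDimensional k h] {R : Type u} [CommRing R] [Algebra k R]

/-- `(R, j)` is a symmetric algebra of the `k`-vector space `h*`. -/
def IsSymmetricAlgebraUP (j : Module.Dual k h →ₗ[k] R) : Prop :=
  ∀ (A : Type u) [CommRing A] [Algebra k A] (f : Module.Dual k h →ₗ[k] A),
    ∃! g : R →ₐ[k] A, ∀ β : Module.Dual k h, g (j β) = f β

/-- The subalgebra `R^s` of fixed points of an algebra automorphism `σ` of `R`. -/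
def fixedSubalgebra (σ : R ≃ₐ[k] R) : Subalgebra k R :=
  AlgHom.equalizer (σ : R →ₐ[k] R) (AlgHom.id k R)

/-- The left `R`-action on `B = R ⊗[R^s] R` (multiplication on the left factor). -/
noncomputable def lAct (σ : R ≃ₐ[k] R) (f : R) :
    R ⊗[fixedSubalgebra σ] R →ₗ[fixedSubalgebra σ] R ⊗[fixedSubalgebra σ] R :=
  TensorProduct.map (LinearMap.mulLeft (fixedSubalgebra σ) f) LinearMap.id

/-- The right `R`-action on `B = R ⊗[R^s] R` (multiplication on the right factor). -/
noncomputable def rAct (σ : R ≃ₐ[k] R) (f : R) :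
    R ⊗[fixedSubalgebra σ] R →ₗ[fixedSubalgebra σ] R ⊗[fixedSubalgebra σ] R :=
  TensorProduct.map LinearMap.id (LinearMap.mulLeft (fixedSubalgebra σ) f)

/-- The multiplication map `B = R ⊗[R^s] R → R`, `a ⊗ b ↦ a b`. -/
noncomputable def mulMap (σ : R ≃ₐ[k] R) :
    R ⊗[fixedSubalgebra σ] R →ₗ[fixedSubalgebra σ] R :=
  TensorProduct.lift (LinearMap.mul (fixedSubalgebra σ) R)

/-- The element `δ = (α/2) ⊗ 1 + 1 ⊗ (α/2)` of `B = R ⊗[R^s] R`. -/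
noncomputable def deltaElt (σ : R ≃ₐ[k] R) (j : Module.Dual k h →ₗ[k] R)
    (α : Module.Dual k h) : R ⊗[fixedSubalgebra σ] R :=
  j ((2⁻¹ : k) • α) ⊗ₜ[fixedSubalgebra σ] (1 : R) +
    (1 : R) ⊗ₜ[fixedSubalgebra σ] j ((2⁻¹ : k) • α)


section Aux

variable (σ : R ≃ₐ[k] R)

lemma move_fixed (r : R) (hr : r ∈ fixedSubalgebra σ) (x y : R) :
    (r * x) ⊗ₜ[fixedSubalgebra σ] y = x ⊗ₜ[fixedSubalgebra σ] (r * y) := by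
  have := TensorProduct.smul_tmul (R := fixedSubalgebra σ) (R' := fixedSubalgebra σ)
    (⟨r, hr⟩ : fixedSubalgebra σ) x y
  simpa [Algebra.smul_def] using this

@[simp] lemma lAct_tmul (f x y : R) :
    lAct σ f (x ⊗ₜ[fixedSubalgebra σ] y) = (f * x) ⊗ₜ[fixedSubalgebra σ] y := by
  rfl

@[simp] lemma rAct_tmul (f x y : R) :
    rAct σ f (x ⊗ₜ[fixedSubalgebra σ] y) = x ⊗ₜ[fixedSubalgebra σ] (f * y) := by
  rfl

@[simp] lemma mulMap_tmul (x y : R) :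
    mulMap σ (x ⊗ₜ[fixedSubalgebra σ] y) = x * y := by
  rfl

lemma lAct_mul' (f g : R) (z : R ⊗[fixedSubalgebra σ] R) :
    lAct σ (f * g) z = lAct σ f (lAct σ g z) := by
  induction z using TensorProduct.induction_on with
  | zero => simp
  | tmul a b => simp [mul_assoc]
  | add x y hx hy => simp [map_add, hx, hy]

lemma rAct_mul' (f g : R) (z : R ⊗[fixedSubalgebra σ] R) :
    rAct σ (f * g) z = rAct σ f (rAct σ g z) := by
  induction z using TensorProduct.induction_on with
  | zero => simp
  | tmul a b => simp [mul_assoc]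
  | add x y hx hy => simp [map_add, hx, hy]

lemma lAct_add' (f g : R) (z : R ⊗[fixedSubalgebra σ] R) :
    lAct σ (f + g) z = lAct σ f z + lAct σ g z := by
  induction z using TensorProduct.induction_on with
  | zero => simp
  | tmul a b => simp [add_mul, TensorProduct.add_tmul]
  | add x y hx hy => simp only [map_add, hx, hy]; abel

lemma rAct_add' (f g : R) (z : R ⊗[fixedSubalgebra σ] R) :
    rAct σ (f + g) z = rAct σ f z + rAct σ g z := by
  induction z using TensorProduct.induction_on with
  | zero => simp
  | tmul a b => simp [add_mul, TensorProduct.tmul_add]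
  | add x y hx hy => simp only [map_add, hx, hy]; abel

lemma lAct_rAct_comm (f g : R) (z : R ⊗[fixedSubalgebra σ] R) :
    lAct σ f (rAct σ g z) = rAct σ g (lAct σ f z) := by
  induction z using TensorProduct.induction_on with
  | zero => simp
  | tmul a b => simp
  | add x y hx hy => simp [map_add, hx, hy]

lemma fixed_comm (r : R) (hr : r ∈ fixedSubalgebra σ) (z : R ⊗[fixedSubalgebra σ] R) :
    lAct σ r z = rAct σ r z := by
  induction z using TensorProduct.induction_on with
  | zero => simp
  | tmul a b => simpa using move_fixed σ r hr a b
  | add x y hx hy => simp [map_add, hx, hy]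

lemma key_comm (a e x : R) (c : k) (he : e ∈ fixedSubalgebra σ)
    (ha2 : a * a ∈ fixedSubalgebra σ) (hx : x = e + c • a) :
    lAct σ x (a ⊗ₜ[fixedSubalgebra σ] 1 + 1 ⊗ₜ[fixedSubalgebra σ] a)
      = rAct σ x (a ⊗ₜ[fixedSubalgebra σ] 1 + 1 ⊗ₜ[fixedSubalgebra σ] a) := by
  have hc : algebraMap k R c ∈ fixedSubalgebra σ := by
    show σ _ = _
    simp [AlgEquiv.commutes]
  set c' := algebraMap k R c with hc'
  have hx' : x = e + c' * a := by rw [hx, Algebra.smul_def]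
  subst hx'
  simp only [map_add, lAct_tmul, rAct_tmul]
  simp only [add_mul, mul_one, TensorProduct.add_tmul, TensorProduct.tmul_add]
  have h1 : (e * a) ⊗ₜ[fixedSubalgebra σ] (1:R) = a ⊗ₜ[fixedSubalgebra σ] e := by
    simpa using move_fixed σ e he a 1
  have h2 : (c' * a * a) ⊗ₜ[fixedSubalgebra σ] (1:R)
      = (1:R) ⊗ₜ[fixedSubalgebra σ] (c' * a * a) := by
    have e1 := move_fixed σ (a*a) ha2 c' 1
    have e2 := move_fixed σ c' hc 1 (a*a)
    rw [mul_one] at e1 e2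
    calc (c'*a*a) ⊗ₜ[fixedSubalgebra σ] (1:R)
        = ((a*a)*c') ⊗ₜ[fixedSubalgebra σ] (1:R) := by rw [mul_assoc, mul_comm]
      _ = c' ⊗ₜ[fixedSubalgebra σ] (a*a) := e1
      _ = (1:R) ⊗ₜ[fixedSubalgebra σ] (c'*(a*a)) := e2
      _ = (1:R) ⊗ₜ[fixedSubalgebra σ] (c'*a*a) := by rw [mul_assoc]
  have h3 : e ⊗ₜ[fixedSubalgebra σ] a = (1:R) ⊗ₜ[fixedSubalgebra σ] (e * a) := by
    have := move_fixed σ e he 1 a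
    rwa [mul_one] at this
  have h4 : (c' * a) ⊗ₜ[fixedSubalgebra σ] a = a ⊗ₜ[fixedSubalgebra σ] (c' * a) :=
    move_fixed σ c' hc a a
  rw [h1, h2, h3, h4]
  abel

lemma adjoin_range_eq_top (j : Module.Dual k h →ₗ[k] R) (hR : IsSymmetricAlgebraUP j) :
    Algebra.adjoin k (Set.range j) = ⊤ := by
  set A := Algebra.adjoin k (Set.range j) with hA
  have hmem : ∀ β, j β ∈ A := fun β => Algebra.subset_adjoin ⟨β, rfl⟩
  let j' : Module.Dual k h →ₗ[k] A :=
    { toFun := fun β => ⟨j β, hmem β⟩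
      map_add' := fun x y => by ext; simp
      map_smul' := fun c x => by ext; simp }
  obtain ⟨g, hg, -⟩ := hR A j'
  obtain ⟨g0, -, hg0u⟩ := hR R j
  have h1 : A.val.comp g = g0 := hg0u _ (fun β => by simp [hg β, j'])
  have h2 : AlgHom.id k R = g0 := hg0u _ (fun β => rfl)
  have h3 : A.val.comp g = AlgHom.id k R := h1.trans h2.symm
  rw [eq_top_iff]
  intro x _
  have : A.val (g x) = x := congrArg (fun f => f x) h3 |>.trans rfl
  exact this ▸ (g x).2

end Aux

theorem statement12 (h2 : (2 : k) ≠ 0)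
    (j : Module.Dual k h →ₗ[k] R) (hR : IsSymmetricAlgebraUP j)
    (α : Module.Dual k h) (αv : h) (hpair : α αv = 2)
    (σ : R ≃ₐ[k] R) (hσ : ∀ β : Module.Dual k h, σ (j β) = j (β - β αv • α)) :
    -- `f • δ = δ • f` for every `f ∈ R` …
    (∀ f : R, lAct σ f (deltaElt σ j α) = rAct σ f (deltaElt σ j α)) ∧
    -- … consequently `f ↦ f • δ` is a morphism of `(R, R)`-bimodules …
    (∀ f g : R, lAct σ (f + g) (deltaElt σ j α) =
      lAct σ f (deltaElt σ j α) + lAct σ g (deltaElt σ j α)) ∧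
    (∀ f g : R, lAct σ (g * f) (deltaElt σ j α) = lAct σ g (lAct σ f (deltaElt σ j α))) ∧
    (∀ f g : R, lAct σ (f * g) (deltaElt σ j α) = rAct σ g (lAct σ f (deltaElt σ j α))) ∧
    -- … and the composite with the multiplication map `B → R` is multiplication by `α`:
    (∀ f : R, mulMap σ (lAct σ f (deltaElt σ j α)) = j α * f) := by
  have h2' : (2:k)⁻¹ * 2 = 1 := inv_mul_cancel₀ h2
  set a : R := j ((2⁻¹ : k) • α) with ha_def
  -- σ a = -a
  have hsa : σ a = -a := by
    rw [ha_def, hσ]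
    rw [← map_neg]
    congr 1
    have hev : ((2⁻¹ : k) • α) αv = 1 := by
      rw [LinearMap.smul_apply, hpair, smul_eq_mul, h2']
    rw [hev, one_smul]
    match_scalars
    field_simp
    ring
  have ha2 : a * a ∈ fixedSubalgebra σ := by
    show σ (a * a) = a * a
    rw [map_mul, hsa]
    ring
  -- part 1: commutation
  have part1 : ∀ f : R, lAct σ f (deltaElt σ j α) = rAct σ f (deltaElt σ j α) := by
    intro f
    have hf : f ∈ Algebra.adjoin k (Set.range j) := by
      rw [adjoin_range_eq_top j hR]; trivial
    induction hf using Algebra.adjoin_induction with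
    | mem x hx =>
      obtain ⟨β, rfl⟩ := hx
      -- σ² (j β) = j β
      have hσσ : σ (σ (j β)) = j β := by
        rw [hσ β, hσ]
        congr 1
        have hev : (β - β αv • α) αv = - β αv := by
          rw [LinearMap.sub_apply, LinearMap.smul_apply, hpair, smul_eq_mul]
          ring
        rw [hev]
        module
      set e : R := (2⁻¹ : k) • (j β + σ (j β)) with he_def
      have he : e ∈ fixedSubalgebra σ := by
        show σ e = e
        rw [he_def, map_smul, map_add, hσσ, add_comm]
      have hx : j β = e + (β αv) • a := by
        rw [he_def, ha_def, hσ β, map_sub, map_smul, map_smul]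
        match_scalars <;> (field_simp; try ring)
      exact key_comm σ a e (j β) (β αv) he ha2 hx
    | algebraMap c =>
      exact fixed_comm σ _ (by show σ _ = _; simp [AlgEquiv.commutes]) _
    | add x y _ _ hx hy =>
      rw [lAct_add', rAct_add', hx, hy]
    | mul x y _ _ hx hy =>
      rw [lAct_mul', hy, lAct_rAct_comm, hx, ← rAct_mul', mul_comm y x]
  refine ⟨part1, fun f g => lAct_add' σ f g _, fun f g => lAct_mul' σ g f _, ?_, ?_⟩
  · intro f g
    rw [lAct_mul', part1 g, lAct_rAct_comm]
  · intro f
    simp only [deltaElt, map_add, lAct_tmul, mulMap_tmul, mul_one, ← ha_def]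
    rw [ha_def, map_smul, mul_smul_comm, ← add_smul]
    rw [show (2⁻¹ : k) + 2⁻¹ = 1 by field_simp; norm_num, one_smul, mul_comm]
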